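/- Let DG be a 2-dimensional digraph (a finite directed graph with edge set E = E_1 ⊔ E_2 and a bijection φ on bicolored paths of length two satisfying (F1)). Then every equivalence class (under the relation generated by diverting over φ) of a path containing m edges of color 1 and n edges of color 2 has a representative path in which all m edges of color 2 appear first (nearest the origin), followed by all edges of color 1. -/

import Mathlib

def IsDiPath {V E : Type} (o t : E → V) (A : List E) : Prop :=
  A.Chain' (fun x y => t x = o y)

def Diverts {V E : Type} (o t : E → V) {k : ℕ} (color : E → Fin k)
    (φ : E × E → E × E) (A A' : List E) : Prop :=
  ∃ (p s : List E) (x y : E), t x = o y ∧ color x ≠ color y ∧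
    A = p ++ x :: y :: s ∧ A' = p ++ (φ (x, y)).1 :: (φ (x, y)).2 :: s

def DivEquiv {V E : Type} (o t : E → V) {k : ℕ} (color : E → Fin k)
    (φ : E × E → E × E) (A A' : List E) : Prop :=
  A = A' ∨ Relation.TransGen (Diverts o t color φ) A A'

def F1 {V E : Type} (o t : E → V) {k : ℕ} (color : E → Fin k)
    (φ : E × E → E × E) : Prop :=
  ∀ x y : E, t x = o y → color x ≠ color y →
    color (φ (x, y)).1 = color y ∧ color (φ (x, y)).2 = color x ∧
    o (φ (x, y)).1 = o x ∧ t (φ (x, y)).2 = t y ∧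
    t (φ (x, y)).1 = o (φ (x, y)).2 ∧
    φ ((φ (x, y)).1, (φ (x, y)).2) = (x, y)

def inv2 : List (Fin 2) → ℕ
  | [] => 0
  | c :: l => (if c = 0 then l.count 1 else 0) + inv2 l

lemma inv2_lt (p s : List (Fin 2)) :
    inv2 (p ++ 1 :: 0 :: s) < inv2 (p ++ 0 :: 1 :: s) := by
  induction p with
  | nil => simp [inv2, List.count_cons]
  | cons a p ih =>
    simp only [List.cons_append, inv2, List.append_eq]
    have hc : (p ++ (1:Fin 2) :: 0 :: s).count 1 = (p ++ (0:Fin 2) :: 1 :: s).count 1 := by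
      simp [List.count_append, List.count_cons]
    rw [hc]
    exact Nat.add_lt_add_left ih _

lemma split_or_sorted {E : Type} (color : E → Fin 2) (l : List E) :
    (∃ B C, l = B ++ C ∧ (∀ e ∈ B, color e = 1) ∧ (∀ e ∈ C, color e = 0)) ∨
    (∃ p s x y, l = p ++ x :: y :: s ∧ color x = 0 ∧ color y = 1) := by
  induction l with
  | nil => exact Or.inl ⟨[], [], rfl, by simp, by simp⟩
  | cons a l ih =>
    rcases ih with ⟨B, C, rfl, h1, h0⟩ | ⟨p, s, x, y, rfl, hx, hy⟩
    · by_cases ha : color a = 1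
      · refine Or.inl ⟨a :: B, C, rfl, ?_, h0⟩
        intro e he
        rcases List.mem_cons.1 he with rfl | he
        · exact ha
        · exact h1 e he
      · have ha0 : color a = 0 := by
          have h2 := (color a).isLt
          have h3 : (color a).val ≠ 1 := fun h => ha (Fin.ext h)
          exact Fin.ext (by omega)
        cases B with
        | nil =>
          refine Or.inl ⟨[], a :: C, by simp, by simp, ?_⟩
          intro e he
          rcases List.mem_cons.1 he with rfl | he
          · exact ha0
          · exact h0 e he
        | cons b B =>
          exact Or.inr ⟨[], B ++ C, a, b, by simp, ha0, h1 b (by simp)⟩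
    · exact Or.inr ⟨a :: p, s, x, y, by simp, hx, hy⟩


/-- in a 2-dimensional digraph (colours `0` for `E₁` and `1`
for `E₂`), every path is equivalent (under the relation generated by
diverting over `φ`) to a path in which all edges of colour `1` (i.e. of
`E₂`) appear first, nearest the origin, followed by all edges of colour
`0` (i.e. of `E₁`). -/
theorem stmt3 {V E : Type} [Fintype V] [Fintype E] (o t : E → V)
    (color : E → Fin 2) (φ : E × E → E × E) (hF1 : F1 o t color φ)
    (A : List E) (hA : IsDiPath o t A) :
    ∃ B C : List E, DivEquiv o t color φ A (B ++ C) ∧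
      (∀ e ∈ B, color e = 1) ∧ (∀ e ∈ C, color e = 0) := by
  suffices key : ∀ n (A : List E), inv2 (A.map color) = n → IsDiPath o t A →
      ∃ B C : List E, DivEquiv o t color φ A (B ++ C) ∧
        (∀ e ∈ B, color e = 1) ∧ (∀ e ∈ C, color e = 0) from key _ A rfl hA
  intro n
  induction n using Nat.strong_induction_on with
  | _ n ih =>
    intro A hn hA
    rcases split_or_sorted color A with ⟨B, C, hBC, h1, h0⟩ | ⟨p, s, x, y, hA', hx, hy⟩
    · exact ⟨B, C, Or.inl hBC, h1, h0⟩
    · subst hA'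
      have hA2 := hA
      rw [IsDiPath, List.Chain', List.isChain_append] at hA2
      obtain ⟨hp, hxys, hjoin⟩ := hA2
      rw [List.isChain_cons_cons] at hxys
      obtain ⟨hxy, hys⟩ := hxys
      have hne : color x ≠ color y := by rw [hx, hy]; decide
      obtain ⟨hc1, hc2, ho1, ht2, hmid, -⟩ := hF1 x y hxy hne
      have hdiv : Diverts o t color φ (p ++ x :: y :: s)
          (p ++ (φ (x, y)).1 :: (φ (x, y)).2 :: s) :=
        ⟨p, s, x, y, hxy, hne, rfl, rfl⟩
      have hpath' : IsDiPath o t (p ++ (φ (x, y)).1 :: (φ (x, y)).2 :: s) := by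
        rw [IsDiPath, List.Chain', List.isChain_append]
        refine ⟨hp, ?_, ?_⟩
        · rw [List.isChain_cons_cons]
          refine ⟨hmid, ?_⟩
          rw [List.isChain_cons] at hys ⊢
          refine ⟨fun h hh => ?_, hys.2⟩
          rw [ht2]
          exact hys.1 h hh
        · intro a ha b hb
          simp only [List.head?_cons, Option.mem_def, Option.some.injEq] at hb
          subst hb
          rw [ho1]
          exact hjoin a ha x (by simp)
      have hlt : inv2 ((p ++ (φ (x, y)).1 :: (φ (x, y)).2 :: s).map color) < n := by
        rw [← hn]
        simp only [List.map_append, List.map_cons]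
        rw [hc1, hc2, hx, hy]
        exact inv2_lt _ _
      obtain ⟨B, C, hequiv, h1, h0⟩ := ih _ hlt _ rfl hpath'
      refine ⟨B, C, ?_, h1, h0⟩
      rcases hequiv with h | h
      · exact Or.inr (h ▸ Relation.TransGen.single hdiv)
      · exact Or.inr (Relation.TransGen.head hdiv h)
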